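/- For every d = (d_1,…,d_n) with d_1,…,d_{n−1} ∈ ℝ ∪ {−∞} and d_n ∈ ℝ, the set M_d = {μ ∈ C : d_i ≤ S_i(μ) for 1 ≤ i ≤ n−1, and d_n = S_n(μ)} is nonempty and contains a unique minimal element ρ(d) with respect to ≤, i.e. ρ(d) ∈ M_d and ρ(d) ≤ μ for every μ ∈ M_d. Moreover, if all coordinates d_i are finite and x ∈ ℝ^n is the unique vector with S_i(x) = d_i for all i, then ρ(d) = r(x). -/

import Mathlib

/-- The dominant cone `C = {x ∈ ℝⁿ : x₁ ≥ x₂ ≥ ⋯ ≥ xₙ}`. -/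
def domCone (n : ℕ) : Set (EuclideanSpace ℝ (Fin n)) :=
  {x | ∀ i j : Fin n, i ≤ j → x j ≤ x i}

/-- `r` is the map sending each point of `ℝⁿ` to the (unique) closest point
of the dominant cone. -/
def IsClosestPointMap (n : ℕ)
    (r : EuclideanSpace ℝ (Fin n) → EuclideanSpace ℝ (Fin n)) : Prop :=
  ∀ x, r x ∈ domCone n ∧ ∀ c ∈ domCone n, dist x (r x) ≤ dist x c

/-- `S_k(x) = x₁ + ⋯ + x_k`, the sum of the first `k` coordinates. -/
def psum {n : ℕ} (x : Fin n → ℝ) (k : ℕ) : ℝ :=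
  ∑ j ∈ Finset.univ.filter (fun j : Fin n => (j : ℕ) < k), x j

/-- The dominance order: `x ≤ y` iff `S_k(x) ≤ S_k(y)` for `k = 1, …, n-1`
and `S_n(x) = S_n(y)`. -/
def dle {n : ℕ} (x y : Fin n → ℝ) : Prop :=
  (∀ k, 1 ≤ k → k < n → psum x k ≤ psum y k) ∧ psum x n = psum y n

/-- The set `M_d = {μ ∈ C : d_i ≤ S_i(μ) for 1 ≤ i ≤ n-1, d_n = S_n(μ)}`, where the
`d_i` for `1 ≤ i ≤ n-1` are allowed to be `-∞` (the bottom element of `WithBot ℝ`). -/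
def Md (n : ℕ) (d : ℕ → WithBot ℝ) : Set (EuclideanSpace ℝ (Fin n)) :=
  {μ | μ ∈ domCone n ∧
       (∀ k, 1 ≤ k → k < n → d k ≤ ((psum μ k : ℝ) : WithBot ℝ)) ∧
       d n = ((psum μ n : ℝ) : WithBot ℝ)}

namespace Stmt7Aux

open Finset

variable {n : ℕ}

/-- extension of a `Fin n` vector to `ℕ` by `0`. -/
def ext (x : Fin n → ℝ) (j : ℕ) : ℝ := if h : j < n then x ⟨j, h⟩ else 0

lemma ext_apply (x : Fin n → ℝ) (i : Fin n) : ext x (i : ℕ) = x i := by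
  simp [ext, i.isLt]

lemma psum_eq_range (x : Fin n → ℝ) {k : ℕ} (hk : k ≤ n) :
    psum x k = ∑ j ∈ Finset.range k, ext x j := by
  unfold psum
  rw [Finset.sum_filter]
  have h1 : ∀ j : Fin n, (if (j : ℕ) < k then x j else 0)
      = (fun m => if m < k then ext x m else 0) (j : ℕ) := by
    intro j; simp only [ext, j.isLt, dif_pos]
  calc ∑ j : Fin n, (if (j : ℕ) < k then x j else 0)
      = ∑ j : Fin n, (fun m => if m < k then ext x m else 0) (j : ℕ) :=
        Finset.sum_congr rfl (fun j _ => h1 j)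
    _ = ∑ j ∈ Finset.range n, (fun m => if m < k then ext x m else 0) j :=
        by exact Fin.sum_univ_eq_sum_range (fun m => if m < k then ext x m else 0) n
    _ = ∑ j ∈ Finset.range n, (if j < k then ext x j else 0) := rfl
    _ = ∑ j ∈ (Finset.range n).filter (fun j => j < k), ext x j :=
        (Finset.sum_filter _ _).symm
    _ = ∑ j ∈ Finset.range k, ext x j := by
        congr 1
        ext j
        simp only [Finset.mem_filter, Finset.mem_range]
        omega

lemma psum_zero (x : Fin n → ℝ) : psum x 0 = 0 := by
  simp [psum]

lemma psum_succ (x : Fin n → ℝ) {k : ℕ} (hk : k < n) :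
    psum x (k + 1) = psum x k + x ⟨k, hk⟩ := by
  rw [psum_eq_range x hk.le, psum_eq_range x hk, Finset.sum_range_succ]
  simp [ext, hk]

lemma coord_eq (x : Fin n → ℝ) (i : Fin n) :
    x i = psum x ((i : ℕ) + 1) - psum x (i : ℕ) := by
  rw [psum_succ x i.isLt]
  simp

/-- Turn a partial-sum sequence into a vector of increments. -/
def toVec (n : ℕ) (T : ℕ → ℝ) : EuclideanSpace ℝ (Fin n) :=
  WithLp.toLp 2 (fun i => T ((i : ℕ) + 1) - T (i : ℕ))

lemma psum_toVec (T : ℕ → ℝ) (hT0 : T 0 = 0) {k : ℕ} (hk : k ≤ n) :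
    psum (toVec n T) k = T k := by
  rw [psum_eq_range _ hk]
  have h : ∀ j ∈ Finset.range k, ext (toVec n T) j = T (j + 1) - T j := by
    intro j hj
    have hjn : j < n := lt_of_lt_of_le (Finset.mem_range.mp hj) hk
    simp [ext, toVec, hjn]
  rw [Finset.sum_congr rfl h, Finset.sum_range_sub (f := T), hT0, sub_zero]

lemma concave_of_mem {x : EuclideanSpace ℝ (Fin n)} (hx : x ∈ domCone n)
    {k : ℕ} (h1 : 1 ≤ k) (h2 : k < n) :
    psum x (k + 1) + psum x (k - 1) ≤ 2 * psum x k := by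
  obtain ⟨m, rfl⟩ : ∃ m, k = m + 1 := ⟨k - 1, by omega⟩
  have hm : m < n := by omega
  have e1 : psum x (m + 1 + 1) = psum x (m + 1) + x ⟨m + 1, h2⟩ := psum_succ x h2
  have e2 : psum x (m + 1) = psum x m + x ⟨m, hm⟩ := psum_succ x hm
  have hd : x ⟨m + 1, h2⟩ ≤ x ⟨m, hm⟩ := hx ⟨m, hm⟩ ⟨m + 1, h2⟩ (by simp)
  have : m + 1 - 1 = m := by omega
  rw [this]
  linarith

lemma toVec_mem_Md (d : ℕ → WithBot ℝ) (T : ℕ → ℝ) (hT0 : T 0 = 0)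
    (hTn : d n = ((T n : ℝ) : WithBot ℝ))
    (hcons : ∀ k, 1 ≤ k → k < n → d k ≤ ((T k : ℝ) : WithBot ℝ))
    (hconc : ∀ k, 1 ≤ k → k < n → T (k + 1) + T (k - 1) ≤ 2 * T k) :
    toVec n T ∈ Md n d := by
  have hmono : ∀ j, j < n → ∀ i, i ≤ j → T (j + 1) - T j ≤ T (i + 1) - T i := by
    intro j
    induction j with
    | zero =>
      intro _ i hi
      have : i = 0 := Nat.le_zero.mp hi
      subst this; exact le_rfl
    | succ m ih =>
      intro hj i hi
      rcases Nat.lt_or_ge i (m + 1) with h | h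
      · have step : T (m + 1 + 1) - T (m + 1) ≤ T (m + 1) - T m := by
          have hc := hconc (m + 1) (by omega) hj
          have : m + 1 - 1 = m := by omega
          rw [this] at hc
          linarith
        exact le_trans step (ih (by omega) i (by omega))
      · have : i = m + 1 := le_antisymm hi h
        subst this; exact le_rfl
  refine ⟨?_, ?_, ?_⟩
  · intro i j hij
    exact hmono (j : ℕ) j.isLt (i : ℕ) hij
  · intro k hk1 hk2
    rw [psum_toVec T hT0 hk2.le]
    exact hcons k hk1 hk2
  · rw [psum_toVec T hT0 le_rfl]
    exact hTn

lemma psum_ge_chord {x : EuclideanSpace ℝ (Fin n)} (hx : x ∈ domCone n)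
    {k : ℕ} (hk : k ≤ n) :
    (k : ℝ) * psum x n ≤ (n : ℝ) * psum x k := by
  rcases Nat.eq_zero_or_pos k with rfl | hk1
  · simp [psum_zero]
  rcases eq_or_lt_of_le hk with rfl | hkn
  · exact le_rfl
  have hk1n : k - 1 < n := by omega
  set m : ℝ := x ⟨k - 1, hk1n⟩ with hm
  have h1 : (k : ℝ) * m ≤ psum x k := by
    rw [psum_eq_range x hk]
    have : ∀ j ∈ Finset.range k, m ≤ ext x j := by
      intro j hj
      have hjk : j < k := Finset.mem_range.mp hj
      have hjn : j < n := lt_of_lt_of_le hjk hk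
      have := hx ⟨j, hjn⟩ ⟨k - 1, hk1n⟩ (by simp; omega)
      simpa [ext, hjn, hm] using this
    calc (k : ℝ) * m = ∑ _j ∈ Finset.range k, m := by
          rw [Finset.sum_const, Finset.card_range, nsmul_eq_mul]
      _ ≤ ∑ j ∈ Finset.range k, ext x j := Finset.sum_le_sum this
  have h2 : psum x n - psum x k ≤ ((n - k : ℕ) : ℝ) * m := by
    rw [psum_eq_range x le_rfl, psum_eq_range x hk, ← Finset.sum_Ico_eq_sub _ hk]
    have : ∀ j ∈ Finset.Ico k n, ext x j ≤ m := by
      intro j hj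
      obtain ⟨hj1, hj2⟩ := Finset.mem_Ico.mp hj
      have := hx ⟨k - 1, hk1n⟩ ⟨j, hj2⟩ (by simp; omega)
      simpa [ext, hj2, hm] using this
    calc ∑ j ∈ Finset.Ico k n, ext x j ≤ ∑ _j ∈ Finset.Ico k n, m :=
          Finset.sum_le_sum this
      _ = ((n - k : ℕ) : ℝ) * m := by rw [Finset.sum_const, Nat.card_Ico, nsmul_eq_mul]
  have hcast : ((n - k : ℕ) : ℝ) = (n : ℝ) - (k : ℝ) := by
    rw [Nat.cast_sub hk]
  rw [hcast] at h2
  have hk0 : (0 : ℝ) ≤ (k : ℝ) := Nat.cast_nonneg k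
  have hnk : (0 : ℝ) ≤ (n : ℝ) - (k : ℝ) := by
    have : (k : ℝ) ≤ (n : ℝ) := Nat.cast_le.mpr hk
    linarith
  nlinarith [mul_le_mul_of_nonneg_left h2 hk0, mul_le_mul_of_nonneg_left h1 hnk]

lemma slack (d : ℕ → WithBot ℝ) {ρ : EuclideanSpace ℝ (Fin n)}
    (hρ : ρ ∈ Md n d) (hmin : ∀ μ ∈ Md n d, dle ρ μ)
    {k : ℕ} (h1 : 1 ≤ k) (h2 : k < n)
    (hlt : d k < ((psum ρ k : ℝ) : WithBot ℝ)) :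
    ρ ⟨k, h2⟩ = ρ ⟨k - 1, by omega⟩ := by
  by_contra hne
  have hk1n : k - 1 < n := by omega
  have hle : ρ ⟨k, h2⟩ ≤ ρ ⟨k - 1, hk1n⟩ :=
    hρ.1 ⟨k - 1, hk1n⟩ ⟨k, h2⟩ (Fin.mk_le_mk.mpr (by omega))
  have hcoordlt : ρ ⟨k, h2⟩ < ρ ⟨k - 1, hk1n⟩ := lt_of_le_of_ne hle hne
  have hγ : ∃ γ : ℝ, 0 < γ ∧ ∀ ε : ℝ, 0 < ε → ε ≤ γ →
      d k ≤ ((psum ρ k - ε : ℝ) : WithBot ℝ) := by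
    cases hd : d k with
    | bot => exact ⟨1, one_pos, fun ε _ _ => bot_le⟩
    | coe c =>
      rw [hd] at hlt
      have hc : c < psum ρ k := WithBot.coe_lt_coe.mp hlt
      exact ⟨psum ρ k - c, by linarith, fun ε hε1 hε2 =>
        WithBot.coe_le_coe.mpr (by linarith)⟩
  obtain ⟨γ, hγ0, hγle⟩ := hγ
  set ε : ℝ := min γ ((ρ ⟨k - 1, hk1n⟩ - ρ ⟨k, h2⟩) / 2) with hεdef
  have hε0 : 0 < ε := lt_min hγ0 (by linarith)
  have hεγ : ε ≤ γ := min_le_left _ _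
  have hεd : 2 * ε ≤ ρ ⟨k - 1, hk1n⟩ - ρ ⟨k, h2⟩ := by
    have := min_le_right γ ((ρ ⟨k - 1, hk1n⟩ - ρ ⟨k, h2⟩) / 2)
    rw [hεdef]; linarith
  set T' : ℕ → ℝ := fun m => psum ρ m - (if m = k then ε else 0) with hT'
  have hT'0 : T' 0 = 0 := by
    simp only [hT']
    rw [psum_zero]
    have : ¬ (0 = k) := by omega
    simp [this]
  have hT'n : T' n = psum ρ n := by
    have : ¬ (n = k) := by omega
    simp [hT', this]
  obtain ⟨m, hmk⟩ : ∃ m, k = m + 1 := ⟨k - 1, by omega⟩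
  have hmn : m < n := by omega
  have hsub1 : k - 1 = m := by omega
  have idA : psum ρ (k + 1) = psum ρ k + ρ ⟨k, h2⟩ := psum_succ ρ h2
  have hfin : (⟨k - 1, hk1n⟩ : Fin n) = ⟨m, hmn⟩ := by
    simp only [Fin.mk.injEq]; exact hsub1
  have idB : psum ρ k = psum ρ (k - 1) + ρ ⟨k - 1, hk1n⟩ := by
    rw [hfin, hsub1, hmk]
    exact psum_succ ρ hmn
  have hmem : toVec n T' ∈ Md n d := by
    apply toVec_mem_Md d T' hT'0
    · rw [hT'n]; exact hρ.2.2
    · intro j hj1 hj2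
      by_cases hjk : j = k
      · subst hjk
        simp only [hT', if_pos rfl]
        exact hγle ε hε0 hεγ
      · simp only [hT', if_neg hjk, sub_zero]
        exact hρ.2.1 j hj1 hj2
    · intro j hj1 hj2
      have base := concave_of_mem hρ.1 hj1 hj2
      by_cases hjk : j = k
      · have e1 : T' (j + 1) = psum ρ (j + 1) := by
          have hx : ¬ (j + 1 = k) := by omega
          simp [hT', hx]
        have e2 : T' (j - 1) = psum ρ (j - 1) := by
          have hx : ¬ (j - 1 = k) := by omega
          simp [hT', hx]
        have e3 : T' j = psum ρ j - ε := by simp [hT', hjk]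
        rw [e1, e2, e3, hjk]
        linarith
      · have e3 : T' j = psum ρ j := by simp [hT', hjk]
        have e1 : T' (j + 1) ≤ psum ρ (j + 1) := by
          by_cases h : j + 1 = k <;> simp [hT', h] <;> linarith
        have e2 : T' (j - 1) ≤ psum ρ (j - 1) := by
          by_cases h : j - 1 = k <;> simp [hT', h] <;> linarith
        rw [e3]
        linarith
  have hcontr := (hmin _ hmem).1 k h1 h2
  rw [psum_toVec T' hT'0 h2.le] at hcontr
  have : T' k = psum ρ k - ε := by simp [hT']
  rw [this] at hcontr
  linarith

lemma exists_mem_Md (hn : 1 ≤ n) (d : ℕ → WithBot ℝ) {a : ℝ}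
    (ha : d n = (a : WithBot ℝ)) : (Md n d).Nonempty := by
  have hn0 : (n : ℝ) ≠ 0 := Nat.cast_ne_zero.mpr (by omega)
  set C : ℝ := ∑ m ∈ Finset.range n, max 0 ((d m).unbotD 0 - (m : ℝ) * (a / n)) with hC
  have hC0 : 0 ≤ C :=
    Finset.sum_nonneg fun m _ => le_max_left _ _
  set W : ℕ → ℝ := fun k => (k : ℝ) * (a / n) + C * ((k : ℝ) * ((n : ℝ) - (k : ℝ))) with hW
  have hW0 : W 0 = 0 := by simp [hW]
  have hWn : W n = a := by
    simp only [hW, sub_self, mul_zero, add_zero]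
    field_simp
  refine ⟨toVec n W, toVec_mem_Md d W hW0 (by rw [hWn]; exact ha) ?_ ?_⟩
  · intro k h1 h2
    cases hd : d k with
    | bot => exact bot_le
    | coe c =>
      refine WithBot.coe_le_coe.mpr ?_
      have hterm : c - (k : ℝ) * (a / n) ≤ C := by
        have hmem : k ∈ Finset.range n := Finset.mem_range.mpr h2
        have hsingle := Finset.single_le_sum
          (f := fun m => max 0 ((d m).unbotD 0 - (m : ℝ) * (a / n)))
          (fun m _ => le_max_left _ _) hmem
        simp only [hd, WithBot.unbotD_coe] at hsingle
        rw [hC]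
        exact le_trans (le_max_right _ _) hsingle
      have h2' : (1 : ℝ) ≤ (k : ℝ) * ((n : ℝ) - (k : ℝ)) := by
        have e1 : (1 : ℝ) ≤ (k : ℝ) := by exact_mod_cast h1
        have e2 : (1 : ℝ) ≤ (n : ℝ) - (k : ℝ) := by
          have : (k : ℝ) + 1 ≤ (n : ℝ) := by exact_mod_cast h2
          linarith
        nlinarith
      have hCk : C ≤ C * ((k : ℝ) * ((n : ℝ) - (k : ℝ))) := le_mul_of_one_le_right hC0 h2'
      simp only [hW]
      linarith
  · intro k h1 h2
    obtain ⟨m, rfl⟩ : ∃ m, k = m + 1 := ⟨k - 1, by omega⟩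
    simp only [hW, Nat.add_sub_cancel]
    push_cast
    nlinarith [hC0]

end Stmt7Aux


theorem stmt_7 (n : ℕ) (hn : 1 ≤ n)
    (d : ℕ → WithBot ℝ) (hdn : ∃ a : ℝ, d n = (a : WithBot ℝ)) :
    (∃! ρ : EuclideanSpace ℝ (Fin n), ρ ∈ Md n d ∧ ∀ μ ∈ Md n d, dle ρ μ) ∧
    (∀ x : EuclideanSpace ℝ (Fin n),
      (∀ k, 1 ≤ k → k ≤ n → d k = ((psum x k : ℝ) : WithBot ℝ)) →
      ∀ r : EuclideanSpace ℝ (Fin n) → EuclideanSpace ℝ (Fin n),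
        IsClosestPointMap n r →
      ∀ ρ : EuclideanSpace ℝ (Fin n),
        (ρ ∈ Md n d ∧ ∀ μ ∈ Md n d, dle ρ μ) → ρ = r x) := by
  classical
  obtain ⟨a, ha⟩ := hdn
  have hn0 : (0 : ℝ) < (n : ℝ) := by
    have : (1 : ℝ) ≤ (n : ℝ) := by exact_mod_cast hn
    linarith
  obtain ⟨w, hw⟩ := Stmt7Aux.exists_mem_Md hn d ha
  have hpsn : ∀ μ ∈ Md n d, psum μ n = a := by
    intro μ hμ
    have h := hμ.2.2
    rw [ha] at h
    exact_mod_cast h.symm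
  set A : ℕ → Set ℝ := fun k => (fun μ : EuclideanSpace ℝ (Fin n) => psum μ k) '' (Md n d) with hA
  have hAne : ∀ k, (A k).Nonempty := fun k => ⟨psum w k, w, hw, rfl⟩
  have hbdd : ∀ k, k ≤ n → BddBelow (A k) := by
    intro k hk
    refine ⟨(k : ℝ) * a / n, ?_⟩
    rintro b ⟨μ, hμ, rfl⟩
    have hch := Stmt7Aux.psum_ge_chord hμ.1 hk
    rw [hpsn μ hμ] at hch
    rw [div_le_iff₀ hn0]
    linarith
  set T : ℕ → ℝ := fun k => sInf (A k) with hT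
  have hTle : ∀ μ ∈ Md n d, ∀ k, k ≤ n → T k ≤ psum μ k := fun μ hμ k hk =>
    csInf_le (hbdd k hk) ⟨μ, hμ, rfl⟩
  have hT0 : T 0 = 0 := by
    apply le_antisymm
    · have h := hTle w hw 0 (by omega)
      rwa [Stmt7Aux.psum_zero] at h
    · apply le_csInf (hAne 0)
      rintro b ⟨μ, hμ, rfl⟩
      exact le_of_eq (Stmt7Aux.psum_zero μ).symm
  have hTn : T n = a := by
    apply le_antisymm
    · have h := hTle w hw n le_rfl
      rwa [hpsn w hw] at h
    · apply le_csInf (hAne n)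
      rintro b ⟨μ, hμ, rfl⟩
      exact le_of_eq (hpsn μ hμ).symm
  have hTcons : ∀ k, 1 ≤ k → k < n → d k ≤ ((T k : ℝ) : WithBot ℝ) := by
    intro k h1 h2
    cases hd : d k with
    | bot => exact bot_le
    | coe c =>
      refine WithBot.coe_le_coe.mpr ?_
      apply le_csInf (hAne k)
      rintro b ⟨μ, hμ, rfl⟩
      have h := hμ.2.1 k h1 h2
      rw [hd] at h
      exact_mod_cast h
  have hTconc : ∀ k, 1 ≤ k → k < n → T (k + 1) + T (k - 1) ≤ 2 * T k := by
    intro k h1 h2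
    apply le_of_forall_pos_le_add
    intro ε hε
    obtain ⟨b, ⟨μ, hμ, rfl⟩, hb⟩ := Real.lt_sInf_add_pos (hAne k) (half_pos hε)
    have c1 := hTle μ hμ (k + 1) (by omega)
    have c2 := hTle μ hμ (k - 1) (by omega)
    have c3 := Stmt7Aux.concave_of_mem hμ.1 h1 h2
    have hbT : psum μ k < T k + ε / 2 := hb
    linarith
  set ρ0 := Stmt7Aux.toVec n T with hρ0
  have hρ0mem : ρ0 ∈ Md n d :=
    Stmt7Aux.toVec_mem_Md d T hT0 (by rw [hTn]; exact ha) hTcons hTconc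
  have hρ0ps : ∀ k, k ≤ n → psum ρ0 k = T k := fun k hk => Stmt7Aux.psum_toVec T hT0 hk
  have hρ0min : ∀ μ ∈ Md n d, dle ρ0 μ := by
    intro μ hμ
    constructor
    · intro k h1 h2
      rw [hρ0ps k h2.le]
      exact hTle μ hμ k h2.le
    · rw [hρ0ps n le_rfl, hTn, hpsn μ hμ]
  have huniq : ∀ y : EuclideanSpace ℝ (Fin n),
      (y ∈ Md n d ∧ ∀ μ ∈ Md n d, dle y μ) → y = ρ0 := by
    rintro y ⟨hymem, hymin⟩
    have h1 := hymin ρ0 hρ0mem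
    have h2 := hρ0min y hymem
    have hps : ∀ k, k ≤ n → psum y k = psum ρ0 k := by
      intro k hk
      rcases Nat.eq_zero_or_pos k with rfl | hk1
      · rw [Stmt7Aux.psum_zero, Stmt7Aux.psum_zero]
      rcases eq_or_lt_of_le hk with rfl | hkn
      · exact h1.2
      · exact le_antisymm (h1.1 k hk1 hkn) (h2.1 k hk1 hkn)
    ext i
    have hi := i.isLt
    rw [Stmt7Aux.coord_eq y i, Stmt7Aux.coord_eq ρ0 i,
      hps ((i : ℕ) + 1) (by omega), hps (i : ℕ) (by omega)]
  refine ⟨⟨ρ0, ⟨hρ0mem, hρ0min⟩, huniq⟩, ?_⟩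
  intro x hx r hr ρ hρ
  obtain ⟨hρmem, hρmin⟩ := hρ
  have hxn : psum x n = psum ρ n := by
    have e1 := hx n hn le_rfl
    have e2 := hρmem.2.2
    rw [e1] at e2
    exact_mod_cast e2
  have hU : ∀ m, 1 ≤ m → m < n → psum x m ≤ psum ρ m := by
    intro m h1 h2
    have e1 := hx m h1 h2.le
    have e2 := hρmem.2.1 m h1 h2
    rw [e1] at e2
    exact_mod_cast e2
  have hps : ∀ m ≤ n, ∑ j ∈ Finset.range m, (Stmt7Aux.ext x j - Stmt7Aux.ext ρ j)
      = psum x m - psum ρ m := by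
    intro m hm
    rw [Finset.sum_sub_distrib, ← Stmt7Aux.psum_eq_range x hm, ← Stmt7Aux.psum_eq_range ρ hm]
  have key : ∀ v : Fin n → ℝ,
      ∑ i : Fin n, (x i - ρ i) * v i
        = ∑ i ∈ Finset.range (n - 1),
            (psum x (i + 1) - psum ρ (i + 1)) * (Stmt7Aux.ext v i - Stmt7Aux.ext v (i + 1)) := by
    intro v
    calc ∑ i : Fin n, (x i - ρ i) * v i
        = ∑ i ∈ Finset.range n,
            Stmt7Aux.ext v i • (Stmt7Aux.ext x i - Stmt7Aux.ext ρ i) := by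
          rw [← (Fin.sum_univ_eq_sum_range
            (fun m => Stmt7Aux.ext v m • (Stmt7Aux.ext x m - Stmt7Aux.ext ρ m)) n)]
          apply Finset.sum_congr rfl
          intro i _
          simp only [Stmt7Aux.ext_apply, smul_eq_mul]
          ring
      _ = _ := by
          rw [Finset.sum_range_by_parts]
          rw [hps n le_rfl]
          rw [show psum x n - psum ρ n = 0 by rw [hxn]; ring, smul_zero, zero_sub]
          rw [← Finset.sum_neg_distrib]
          apply Finset.sum_congr rfl
          intro i hi
          have hin : i + 1 ≤ n := by
            have := Finset.mem_range.mp hi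
            omega
          rw [hps (i + 1) hin, smul_eq_mul]
          ring
  have hinner : ∀ c ∈ domCone n, (@inner ℝ _ _ (x - ρ) (c - ρ)) ≤ 0 := by
    intro c hc
    have hexp : (@inner ℝ _ _ (x - ρ) (c - ρ)) = ∑ i : Fin n, (x i - ρ i) * (c i - ρ i) := by
      rw [PiLp.inner_apply]
      apply Finset.sum_congr rfl
      intro i _
      have e1 : (x - ρ) i = x i - ρ i := rfl
      have e2 : (c - ρ) i = c i - ρ i := rfl
      rw [e1, e2, RCLike.inner_apply, conj_trivial, mul_comm]
    have hsplit : ∑ i : Fin n, (x i - ρ i) * (c i - ρ i)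
        = (∑ i : Fin n, (x i - ρ i) * c i) - ∑ i : Fin n, (x i - ρ i) * ρ i := by
      rw [← Finset.sum_sub_distrib]
      apply Finset.sum_congr rfl
      intro i _
      ring
    rw [hexp, hsplit, key c, key ρ]
    have t1 : ∑ i ∈ Finset.range (n - 1),
        (psum x (i + 1) - psum ρ (i + 1)) * (Stmt7Aux.ext c i - Stmt7Aux.ext c (i + 1)) ≤ 0 := by
      apply Finset.sum_nonpos
      intro i hi
      have hi' := Finset.mem_range.mp hi
      have hUi : psum x (i + 1) - psum ρ (i + 1) ≤ 0 :=
        sub_nonpos.mpr (hU (i + 1) (by omega) (by omega))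
      have hic : i < n := by omega
      have hic1 : i + 1 < n := by omega
      have hci : Stmt7Aux.ext c (i + 1) ≤ Stmt7Aux.ext c i := by
        have := hc ⟨i, hic⟩ ⟨i + 1, hic1⟩ (Fin.mk_le_mk.mpr (by omega))
        simpa [Stmt7Aux.ext, hic, hic1] using this
      exact mul_nonpos_iff.mpr (Or.inr ⟨hUi, by linarith⟩)
    have t2 : ∑ i ∈ Finset.range (n - 1),
        (psum x (i + 1) - psum ρ (i + 1)) * (Stmt7Aux.ext ρ i - Stmt7Aux.ext ρ (i + 1)) = 0 := by
      apply Finset.sum_eq_zero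
      intro i hi
      have hi' := Finset.mem_range.mp hi
      by_cases hU0 : psum x (i + 1) = psum ρ (i + 1)
      · rw [hU0, sub_self, zero_mul]
      · have hlt : d (i + 1) < ((psum ρ (i + 1) : ℝ) : WithBot ℝ) := by
          rw [hx (i + 1) (by omega) (by omega)]
          exact WithBot.coe_lt_coe.mpr
            (lt_of_le_of_ne (hU (i + 1) (by omega) (by omega)) hU0)
        have hsl := Stmt7Aux.slack d hρmem hρmin (by omega : 1 ≤ i + 1)
          (by omega : i + 1 < n) hlt
        have hic : i < n := by omega
        have hic1 : i + 1 < n := by omega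
        have hz : Stmt7Aux.ext ρ i - Stmt7Aux.ext ρ (i + 1) = 0 := by
          simp only [Stmt7Aux.ext, dif_pos hic, dif_pos hic1]
          rw [sub_eq_zero]
          have hfin : (⟨i + 1 - 1, by omega⟩ : Fin n) = ⟨i, hic⟩ := by
            simp only [Fin.mk.injEq]
            omega
          rw [← hfin]
          exact hsl.symm
        rw [hz, mul_zero]
    linarith
  obtain ⟨hrx, hrmin⟩ := hr x
  have hdist : dist x (r x) ≤ dist x ρ := hrmin ρ hρmem.1
  have hip := hinner (r x) hrx
  have hxdecomp : x - r x = (x - ρ) + (ρ - r x) := by abel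
  have hexp2 : ‖x - r x‖ ^ 2 = ‖x - ρ‖ ^ 2 + 2 * (@inner ℝ _ _ (x - ρ) (ρ - r x)) + ‖ρ - r x‖ ^ 2 := by
    rw [hxdecomp]
    exact norm_add_sq_real _ _
  have hneg : (@inner ℝ _ _ (x - ρ) (ρ - r x)) = -(@inner ℝ _ _ (x - ρ) (r x - ρ)) := by
    rw [show ρ - r x = -(r x - ρ) by abel, inner_neg_right]
  have hsq : ‖x - r x‖ ^ 2 ≤ ‖x - ρ‖ ^ 2 := by
    rw [dist_eq_norm, dist_eq_norm] at hdist
    exact pow_le_pow_left₀ (norm_nonneg _) hdist 2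
  have hz2 : ‖ρ - r x‖ ^ 2 ≤ 0 := by
    rw [hneg] at hexp2
    linarith
  have h0 : ‖ρ - r x‖ = 0 := by
    have h1 : ‖ρ - r x‖ ^ 2 = 0 := le_antisymm hz2 (sq_nonneg _)
    exact pow_eq_zero_iff two_ne_zero |>.mp h1
  exact sub_eq_zero.mp (norm_eq_zero.mp h0)
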